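/- arXiv:1605.04477 — 5 statements merged into one kernel-verified Lean document; each statement's English description precedes it below -/
import Mathlib

section
/- Let M be a countable-state Markov chain and M' a 'partial' sub-chain obtained from M by selecting a subset S' ⊆ S containing the initial state, and replacing all outgoing transitions of every expandable state (a state in S' having in M a transition leaving S') by a self-loop with probability 1, while keeping all other transitions. Then for any target set T ⊆ S' containing no expandable states, the probability of reaching T in M' is at most the probability of reaching T in M. -/
open scoped ENNReal Classical

/-- Probability of hitting the set `T` within `n` steps, starting from a given state,
for the transition function `P` (standard value iteration for reachability). -/
noncomputable def hitVal {S : Type*} (P : S → S → ℝ≥0∞) (T : Set S) : ℕ → S → ℝ≥0∞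
  | 0, s => if s ∈ T then 1 else 0
  | n + 1, s => if s ∈ T then 1 else ∑' t, P s t * hitVal P T n t

/-- Probability of eventually hitting the set `T`, starting from `s`. -/
noncomputable def hitProb {S : Type*} (P : S → S → ℝ≥0∞) (T : Set S) (s : S) : ℝ≥0∞ :=
  ⨆ n, hitVal P T n s

/-- Probability of hitting `T` within `n` steps while avoiding `U`, starting from a
given state (constrained reachability `◇T ∧ ¬◇U`). -/
noncomputable def chitVal {S : Type*} (P : S → S → ℝ≥0∞) (T U : Set S) : ℕ → S → ℝ≥0∞
  | 0, s => if s ∈ U then 0 else if s ∈ T then 1 else 0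
  | n + 1, s => if s ∈ U then 0 else if s ∈ T then 1 else ∑' t, P s t * chitVal P T U n t

/-- Probability of eventually hitting `T` before ever visiting `U`, starting from `s`. -/
noncomputable def chitProb {S : Type*} (P : S → S → ℝ≥0∞) (T U : Set S) (s : S) : ℝ≥0∞ :=
  ⨆ n, chitVal P T U n s

/-- Expected reward accumulated within `n` steps before hitting the target set `T`
(the reward of a state is earned upon leaving it). -/
noncomputable def erVal {S : Type*} (P : S → S → ℝ≥0∞) (rew : S → ℝ≥0∞) (T : Set S) :
    ℕ → S → ℝ≥0∞
  | 0, _ => 0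
  | n + 1, s => if s ∈ T then 0 else rew s + ∑' t, P s t * erVal P rew T n t

/-- Total expected reward accumulated until hitting `T`, starting from `s`
(paths never reaching `T` contribute their full accumulated reward). -/
noncomputable def erProb {S : Type*} (P : S → S → ℝ≥0∞) (rew : S → ℝ≥0∞) (T : Set S)
    (s : S) : ℝ≥0∞ :=
  ⨆ n, erVal P rew T n s

/-- A state of `S'` is expandable if it has a transition of `P` leaving `S'`. -/
def Expandable {S : Type*} (P : S → S → ℝ≥0∞) (S' : Set S) (s : S) : Prop :=
  s ∈ S' ∧ ∃ t, t ∉ S' ∧ P s t ≠ 0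

/-- `P'` is the transition function of the partial sub-chain of `P` determined by the
subset `S'`: every expandable state gets a self-loop with probability 1, and all
other states of `S'` keep their transitions. -/
def IsPartialOf {S : Type*} (P' P : S → S → ℝ≥0∞) (S' : Set S) : Prop :=
  (∀ s, Expandable P S' s → ∀ t, P' s t = if t = s then 1 else 0) ∧
  (∀ s ∈ S', ¬ Expandable P S' s → ∀ t, P' s t = P s t)

lemma hitVal_mono {S : Type*} (P : S → S → ℝ≥0∞) (T : Set S) :
    ∀ n s, hitVal P T n s ≤ hitVal P T (n+1) s := by
  intro n
  induction n with
  | zero =>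
    intro s
    simp only [hitVal]
    split <;> simp
  | succ n ih =>
    intro s
    simp only [hitVal]
    split
    · exact le_rfl
    · exact ENNReal.tsum_le_tsum fun t => mul_le_mul_right (ih t) _

lemma tsum_mul_hitProb_le {S : Type*} (P Q : S → S → ℝ≥0∞) (T : Set S) (s : S)
    (hs : s ∉ T) : ∑' t, P s t * hitProb P T t ≤ hitProb P T s := by
  have key : ∑' t, P s t * hitProb P T t ≤ ⨆ n, ∑' t, P s t * hitVal P T n t := by
    simp only [hitProb, ENNReal.mul_iSup]
    rw [ENNReal.tsum_eq_iSup_sum]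
    refine iSup_le fun F => ?_
    rw [ENNReal.finsetSum_iSup_of_monotone (fun t m n hmn => ?_)]
    · exact iSup_mono fun n => ENNReal.sum_le_tsum F
    · exact mul_le_mul_right (monotone_nat_of_le_succ (fun k => hitVal_mono P T k t) hmn) _
  refine key.trans (iSup_le fun n => ?_)
  refine le_trans ?_ (le_iSup _ (n+1))
  simp only [hitVal, if_neg hs]
  exact le_rfl

/-- Partial sub-chain `M'` of a countable-state Markov chain `M`: on a subset `S'`
containing the initial state, expandable states are made absorbing (probability-1
self-loops) and all other transitions are kept. For any target set `T ⊆ S'` containing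
no expandable states, the probability of reaching `T` in `M'` is at most the probability
of reaching `T` in `M`. -/
theorem stmt_4 {S : Type*} [Countable S] (P P' : S → S → ℝ≥0∞)
    (hP : ∀ s, ∑' t, P s t = 1) (hP' : ∀ s, ∑' t, P' s t = 1)
    (S' : Set S) (init : S) (hinit : init ∈ S')
    (hpart : IsPartialOf P' P S')
    (T : Set S) (hT : T ⊆ S') (hTexp : ∀ s ∈ T, ¬ Expandable P S' s) :
    hitProb P' T init ≤ hitProb P T init := by
  have main : ∀ n s, s ∈ S' → hitVal P' T n s ≤ hitProb P T s := by
    intro n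
    induction n with
    | zero =>
      intro s hs
      simp only [hitVal]
      split
      · rename_i h
        exact le_trans (by simp [hitVal, h]) (le_iSup (hitVal P T · s) 0)
      · simp
    | succ n ih =>
      intro s hs
      simp only [hitVal]
      split
      · rename_i h
        exact le_trans (by simp [hitVal, h]) (le_iSup (hitVal P T · s) 0)
      · rename_i h
        by_cases hex : Expandable P S' s
        · have : ∑' t, P' s t * hitVal P' T n t = hitVal P' T n s := by
            rw [tsum_eq_single s]
            · simp [hpart.1 s hex]
            · intro t ht; simp [hpart.1 s hex, ht]
          rw [this]
          exact ih s hs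
        · have hstay : ∀ t, P s t ≠ 0 → t ∈ S' := by
            intro t ht
            by_contra hn
            exact hex ⟨hs, t, hn, ht⟩
          have h1 : ∑' t, P' s t * hitVal P' T n t ≤ ∑' t, P s t * hitProb P T t := by
            refine ENNReal.tsum_le_tsum fun t => ?_
            rw [hpart.2 s hs hex t]
            by_cases h0 : P s t = 0
            · simp [h0]
            · exact mul_le_mul_right (ih t (hstay t h0)) _
          exact h1.trans (tsum_mul_hitProb_le P P' T s h)
  exact iSup_le fun n => main n init hinit
end

section
/- With M and its partial sub-chain M' as above, for disjoint sets T, U ⊆ S' containing no expandable states, the probability of reaching T while avoiding U in M' is at most the corresponding probability in M, and the probability of reaching U in M' is at most the probability of reaching U in M. -/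
open scoped ENNReal Classical

section Aux

variable {S : Type*}

lemma chitVal_mono (P : S → S → ℝ≥0∞) (T U : Set S) :
    ∀ n s, chitVal P T U n s ≤ chitVal P T U (n + 1) s := by
  intro n
  induction n with
  | zero =>
    intro s
    simp only [chitVal]
    split_ifs <;> simp
  | succ n ih =>
    intro s
    simp only [chitVal]
    split_ifs with h1 h2
    · exact le_refl _
    · exact le_refl _
    · exact ENNReal.tsum_le_tsum fun t => mul_le_mul_right (ih t) _

lemma chitVal_monotone (P : S → S → ℝ≥0∞) (T U : Set S) (s : S) :
    Monotone fun n => chitVal P T U n s :=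
  monotone_nat_of_le_succ fun n => chitVal_mono P T U n s

lemma chitProb_step (P : S → S → ℝ≥0∞) (T U : Set S) {s : S}
    (hsT : s ∉ T) (hsU : s ∉ U) :
    ∑' t, P s t * chitProb P T U t ≤ chitProb P T U s := by
  have key : ∑' t, P s t * chitProb P T U t
      = ⨆ n, ∑' t, P s t * chitVal P T U n t := by
    simp only [chitProb, ENNReal.mul_iSup]
    rw [ENNReal.tsum_eq_iSup_sum]
    have : ∀ F : Finset S, ∑ t ∈ F, ⨆ n, P s t * chitVal P T U n t
        = ⨆ n, ∑ t ∈ F, P s t * chitVal P T U n t := by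
      intro F
      exact ENNReal.finsetSum_iSup_of_monotone fun t m n hmn =>
        mul_le_mul_right (chitVal_monotone P T U t hmn) _
    simp_rw [this]
    rw [iSup_comm]
    congr 1
    ext n
    exact (ENNReal.tsum_eq_iSup_sum).symm
  rw [key]
  refine iSup_le fun n => ?_
  refine le_trans ?_ (le_iSup (fun n => chitVal P T U n s) (n + 1))
  simp only [chitVal, if_neg hsU, if_neg hsT]
  exact le_refl _

lemma hitVal_eq_chitVal (P : S → S → ℝ≥0∞) (T : Set S) :
    ∀ n s, hitVal P T n s = chitVal P T ∅ n s := by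
  intro n
  induction n with
  | zero => intro s; simp [hitVal, chitVal]
  | succ n ih =>
    intro s
    simp only [hitVal, chitVal, Set.mem_empty_iff_false, if_false]
    split_ifs with h
    · rfl
    · exact tsum_congr fun t => by rw [ih t]

lemma key_lemma (P P' : S → S → ℝ≥0∞) (S' : Set S)
    (hpart : IsPartialOf P' P S')
    (T U : Set S) (hTU : Disjoint T U) (hT : T ⊆ S') (hU : U ⊆ S') :
    ∀ n s, s ∈ S' → chitVal P' T U n s ≤ chitProb P T U s := by
  intro n
  induction n with
  | zero =>
    intro s hs
    refine le_trans ?_ (le_iSup (fun n => chitVal P T U n s) 0)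
    simp [chitVal]
  | succ n ih =>
    intro s hs
    by_cases hsU : s ∈ U
    · simp [chitVal, hsU]
    by_cases hsT : s ∈ T
    · refine le_trans ?_ (le_iSup (fun n => chitVal P T U n s) 0)
      simp [chitVal, hsU, hsT]
    by_cases hexp : Expandable P S' s
    · have hPs := hpart.1 s hexp
      have : chitVal P' T U (n + 1) s = chitVal P' T U n s := by
        simp only [chitVal, if_neg hsU, if_neg hsT]
        simp_rw [hPs, ite_mul, one_mul, zero_mul]
        rw [tsum_eq_single s (fun t ht => if_neg ht)]
        exact if_pos rfl
      rw [this]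
      exact ih s hs
    · have hPs := hpart.2 s hs hexp
      have hout : ∀ t, t ∉ S' → P s t = 0 := by
        intro t ht
        by_contra h
        exact hexp ⟨hs, t, ht, h⟩
      calc chitVal P' T U (n + 1) s
          = ∑' t, P s t * chitVal P' T U n t := by
            simp only [chitVal, if_neg hsU, if_neg hsT]
            exact tsum_congr fun t => by rw [hPs t]
        _ ≤ ∑' t, P s t * chitProb P T U t := by
            refine ENNReal.tsum_le_tsum fun t => ?_
            by_cases htS : t ∈ S'
            · exact mul_le_mul_right (ih t htS) _
            · simp [hout t htS]
        _ ≤ chitProb P T U s := chitProb_step P T U hsT hsU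

end Aux

/-- With `M` a countable-state Markov chain and `M'` its partial sub-chain (expandable
states of the chosen subset `S'` made absorbing), for disjoint sets `T, U ⊆ S'`
containing no expandable states: the probability of reaching `T` while avoiding `U`
in `M'` is at most the corresponding probability in `M`, and the probability of
reaching `U` in `M'` is at most that in `M`. -/
theorem stmt_5 {S : Type*} [Countable S] (P P' : S → S → ℝ≥0∞)
    (hP : ∀ s, ∑' t, P s t = 1) (hP' : ∀ s, ∑' t, P' s t = 1)
    (S' : Set S) (init : S) (hinit : init ∈ S')
    (hpart : IsPartialOf P' P S')
    (T U : Set S) (hTU : Disjoint T U) (hT : T ⊆ S') (hU : U ⊆ S')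
    (hTexp : ∀ s ∈ T, ¬ Expandable P S' s) (hUexp : ∀ s ∈ U, ¬ Expandable P S' s) :
    chitProb P' T U init ≤ chitProb P T U init ∧ hitProb P' U init ≤ hitProb P U init := by
  constructor
  · exact iSup_le fun n => key_lemma P P' S' hpart T U hTU hT hU n init hinit
  · have : ∀ Q : S → S → ℝ≥0∞, hitProb Q U = chitProb Q U ∅ := by
      intro Q
      funext s
      simp only [hitProb, chitProb]
      exact iSup_congr fun n => hitVal_eq_chitVal Q U n s
    rw [this P', this P]
    exact iSup_le fun n => key_lemma P P' S' hpart U ∅ (Set.disjoint_empty U) hU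
      (Set.empty_subset S') n init hinit
end

section
/- Let M be a countable-state Markov chain with nonnegative rewards, and M' a partial sub-chain obtained by making expandable states absorbing with reward 0. Then the expected reward until reaching an absorbing target T (containing no expandable states) in M' is at most the expected reward until reaching T in M. -/
open scoped ENNReal Classical

lemma erVal_expandable_zero {S : Type*} (P P' : S → S → ℝ≥0∞) (rew : S → ℝ≥0∞)
    (S' : Set S) (hpart : IsPartialOf P' P S')
    (T : Set S) (hTexp : ∀ s ∈ T, ¬ Expandable P S' s) :
    ∀ n s, Expandable P S' s →
      erVal P' (fun s => if Expandable P S' s then 0 else rew s) T n s = 0 := by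
  intro n
  induction n with
  | zero => intro s _; rfl
  | succ n ih =>
    intro s hs
    have hsT : s ∉ T := fun h => hTexp s h hs
    have hsum : (∑' t, P' s t *
        erVal P' (fun s => if Expandable P S' s then 0 else rew s) T n t) = 0 := by
      rw [show (∑' t, P' s t *
          erVal P' (fun s => if Expandable P S' s then 0 else rew s) T n t) =
          P' s s * erVal P' (fun s => if Expandable P S' s then 0 else rew s) T n s from
        tsum_eq_single s (by
          intro t ht
          rw [hpart.1 s hs t, if_neg ht, zero_mul])]
      rw [ih s hs, mul_zero]
    simp [erVal, hsT, hsum, hs]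

lemma erVal_mono {S : Type*} (P P' : S → S → ℝ≥0∞) (rew : S → ℝ≥0∞)
    (S' : Set S) (hpart : IsPartialOf P' P S')
    (T : Set S) (hTexp : ∀ s ∈ T, ¬ Expandable P S' s) :
    ∀ n, ∀ s ∈ S',
      erVal P' (fun s => if Expandable P S' s then 0 else rew s) T n s ≤
        erVal P rew T n s := by
  intro n
  induction n with
  | zero => intro s _; exact le_refl _
  | succ n ih =>
    intro s hs
    by_cases hsT : s ∈ T
    · simp [erVal, hsT]
    by_cases hse : Expandable P S' s
    · have := erVal_expandable_zero P P' rew S' hpart T hTexp (n + 1) s hse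
      rw [this]; exact zero_le
    · show (if s ∈ T then 0 else _) ≤ (if s ∈ T then 0 else _)
      rw [if_neg hsT, if_neg hsT]
      refine add_le_add ?_ ?_
      · simp [hse]
      · refine ENNReal.tsum_le_tsum fun t => ?_
        by_cases hPt : P s t = 0
        · rw [hpart.2 s hs hse t, hPt, zero_mul, zero_mul]
        · rw [hpart.2 s hs hse t]
          refine mul_le_mul_right ?_ _
          have htS' : t ∈ S' := by
            by_contra htS'
            exact hse ⟨hs, t, htS', hPt⟩
          exact ih t htS'

/-- Let `M` be a countable-state Markov chain with nonnegative rewards and `M'` the partial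
sub-chain obtained by making expandable states absorbing with reward `0`. Then the expected
reward accumulated until reaching an absorbing target set `T` (contained in `S'` and
containing no expandable states) in `M'` is at most that in `M`. -/
theorem stmt_8 {S : Type*} [Countable S] (P P' : S → S → ℝ≥0∞)
    (hP : ∀ s, ∑' t, P s t = 1) (hP' : ∀ s, ∑' t, P' s t = 1)
    (rew : S → ℝ≥0∞)
    (S' : Set S) (init : S) (hinit : init ∈ S')
    (hpart : IsPartialOf P' P S')
    (T : Set S) (hT : T ⊆ S') (hTexp : ∀ s ∈ T, ¬ Expandable P S' s)
    (habs : ∀ s ∈ T, P s s = 1) :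
    erProb P' (fun s => if Expandable P S' s then 0 else rew s) T init ≤
      erProb P rew T init := by
  exact iSup_mono fun n => erVal_mono P P' rew S' hpart T hTexp n init hinit
end

section
/- Let M be a countable-state MDP and M' a partial sub-MDP obtained by making expandable states absorbing. Then the infimum over all memoryless deterministic schedulers of the conditional expected reward E(◇sink | ¬◇bad) in M' is at most the corresponding infimum in M, where E(◇sink | ¬◇bad) = ExpRew(◇sink)/(1 − Pr(◇bad)) and the convention 0/0 < 0 is adopted (an undefined quotient 0/0 is treated as less favorable than 0). -/
open scoped ENNReal Classical

/-- A state of `S'` is expandable in the MDP with transition function `P` if some action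
has a transition leaving `S'`. -/
def MDPExpandable {S Act : Type*} (P : S → Act → S → ℝ≥0∞) (S' : Set S) (s : S) : Prop :=
  s ∈ S' ∧ ∃ a t, t ∉ S' ∧ P s a t ≠ 0

lemma erVal_frozen {S : Type*} (Q : S → S → ℝ≥0∞) (rew' : S → ℝ≥0∞) (T : Set S)
    (s : S) (hQ : ∀ t, Q s t = if t = s then 1 else 0) (hr : rew' s = 0) (hT : s ∉ T) :
    ∀ n, erVal Q rew' T n s = 0
  | 0 => rfl
  | (n+1) => by
    simp only [erVal, if_neg hT, hr, zero_add]
    calc ∑' t, Q s t * erVal Q rew' T n t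
        = erVal Q rew' T n s := by
          rw [tsum_eq_single s (fun b hb => by rw [hQ b, if_neg hb, zero_mul]),
            hQ s, if_pos rfl, one_mul]
      _ = 0 := erVal_frozen Q rew' T s hQ hr hT n

lemma hitVal_frozen {S : Type*} (Q : S → S → ℝ≥0∞) (T : Set S)
    (s : S) (hQ : ∀ t, Q s t = if t = s then 1 else 0) (hT : s ∉ T) :
    ∀ n, hitVal Q T n s = 0
  | 0 => by simp [hitVal, hT]
  | (n+1) => by
    simp only [hitVal, if_neg hT]
    calc ∑' t, Q s t * hitVal Q T n t
        = hitVal Q T n s := by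
          rw [tsum_eq_single s (fun b hb => by rw [hQ b, if_neg hb, zero_mul]),
            hQ s, if_pos rfl, one_mul]
      _ = 0 := hitVal_frozen Q T s hQ hT n

lemma erVal_mono_aux {S : Type*} (Q R : S → S → ℝ≥0∞) (S' F : Set S)
    (rew rew' : S → ℝ≥0∞) (T : Set S)
    (hfroz : ∀ s ∈ F, ∀ t, Q s t = if t = s then 1 else 0)
    (hkeep : ∀ s ∈ S', s ∉ F → ∀ t, Q s t = R s t)
    (hclosed : ∀ s ∈ S', s ∉ F → ∀ t, t ∉ S' → R s t = 0)
    (hrew : ∀ s, rew' s = if s ∈ F then 0 else rew s)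
    (hTF : ∀ s ∈ F, s ∉ T) :
    ∀ n, ∀ s ∈ S', erVal Q rew' T n s ≤ erVal R rew T n s := by
  intro n
  induction n with
  | zero => intro s _; simp [erVal]
  | succ n ih =>
    intro s hs
    by_cases hT : s ∈ T
    · simp [erVal, hT]
    by_cases hF : s ∈ F
    · rw [erVal_frozen Q rew' T s (hfroz s hF) (by rw [hrew, if_pos hF]) (hTF s hF)]
      exact zero_le
    · simp only [erVal, if_neg hT]
      rw [hrew s, if_neg hF]
      refine add_le_add le_rfl (ENNReal.tsum_le_tsum fun t => ?_)
      rw [hkeep s hs hF t]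
      by_cases ht : t ∈ S'
      · exact mul_le_mul_right (ih t ht) _
      · rw [hclosed s hs hF t ht]; simp

lemma hitVal_mono_aux {S : Type*} (Q R : S → S → ℝ≥0∞) (S' F : Set S) (T : Set S)
    (hfroz : ∀ s ∈ F, ∀ t, Q s t = if t = s then 1 else 0)
    (hkeep : ∀ s ∈ S', s ∉ F → ∀ t, Q s t = R s t)
    (hclosed : ∀ s ∈ S', s ∉ F → ∀ t, t ∉ S' → R s t = 0)
    (hTF : ∀ s ∈ F, s ∉ T) :
    ∀ n, ∀ s ∈ S', hitVal Q T n s ≤ hitVal R T n s := by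
  intro n
  induction n with
  | zero => intro s _; simp [hitVal]
  | succ n ih =>
    intro s hs
    by_cases hT : s ∈ T
    · simp [hitVal, hT]
    by_cases hF : s ∈ F
    · rw [hitVal_frozen Q T s (hfroz s hF) (hTF s hF)]
      exact zero_le
    · simp only [hitVal, if_neg hT]
      refine ENNReal.tsum_le_tsum fun t => ?_
      rw [hkeep s hs hF t]
      by_cases ht : t ∈ S'
      · exact mul_le_mul_right (ih t ht) _
      · rw [hclosed s hs hF t ht]; simp

/-- Theorem 1 of the paper: for a countable-state MDP `M` (with absorbing states `sink`
and `bad`, `bad` leading to `sink` with probability 1 under every action, and nonnegative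
rewards) and its partial sub-MDP `M'` (expandable states made absorbing via probability-1
self-loops with reward 0, everything else unchanged), the infimum over all memoryless
deterministic schedulers of the conditional expected reward
`ExpRew(◇sink) / (1 - Pr(◇bad))` in `M'` is at most the corresponding infimum in `M`.
(In `ℝ≥0∞`, `0 / 0 = 0`, realizing the convention that an undefined quotient `0/0` is
less favorable than `0` for the minimizing scheduler.) -/
theorem stmt_10 {S Act : Type*} [Countable S]
    (P P' : S → Act → S → ℝ≥0∞) (enabled : S → Set Act)
    (hne : ∀ s, (enabled s).Nonempty)
    (hP : ∀ s a, a ∈ enabled s → ∑' t, P s a t = 1)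
    (hP' : ∀ s a, a ∈ enabled s → ∑' t, P' s a t = 1)
    (rew : S → ℝ≥0∞)
    (sink bad : S)
    (hbad : ∀ a, P bad a sink = 1) (hsink : ∀ a, P sink a sink = 1)
    (S' : Set S) (init : S) (hinit : init ∈ S') (hsink' : sink ∈ S') (hbad' : bad ∈ S')
    (hsinkexp : ¬ MDPExpandable P S' sink) (hbadexp : ¬ MDPExpandable P S' bad)
    (hpartexp : ∀ s, MDPExpandable P S' s → ∀ a t, P' s a t = if t = s then 1 else 0)
    (hpartkeep : ∀ s ∈ S', ¬ MDPExpandable P S' s → ∀ a t, P' s a t = P s a t) :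
    (⨅ σ : {σ : S → Act // ∀ s, σ s ∈ enabled s},
        erProb (fun s t => P' s (σ.1 s) t)
            (fun s => if MDPExpandable P S' s then 0 else rew s) {sink} init /
          (1 - hitProb (fun s t => P' s (σ.1 s) t) {bad} init)) ≤
      ⨅ σ : {σ : S → Act // ∀ s, σ s ∈ enabled s},
        erProb (fun s t => P s (σ.1 s) t) rew {sink} init /
          (1 - hitProb (fun s t => P s (σ.1 s) t) {bad} init) := by
  refine iInf_mono fun σ => ?_
  set F : Set S := {s | MDPExpandable P S' s} with hFdef
  have hfroz : ∀ s ∈ F, ∀ t, (fun s t => P' s (σ.1 s) t) s t = if t = s then 1 else 0 :=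
    fun s hs t => hpartexp s hs (σ.1 s) t
  have hkeep : ∀ s ∈ S', s ∉ F → ∀ t, (fun s t => P' s (σ.1 s) t) s t = P s (σ.1 s) t :=
    fun s hs hF t => hpartkeep s hs hF (σ.1 s) t
  have hclosed : ∀ s ∈ S', s ∉ F → ∀ t, t ∉ S' → P s (σ.1 s) t = 0 := by
    intro s hs hF t ht
    by_contra h
    exact hF ⟨hs, σ.1 s, t, ht, h⟩
  have her : erProb (fun s t => P' s (σ.1 s) t)
      (fun s => if MDPExpandable P S' s then 0 else rew s) {sink} init ≤
      erProb (fun s t => P s (σ.1 s) t) rew {sink} init := by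
    refine iSup_mono fun n => ?_
    refine erVal_mono_aux _ _ S' F rew _ {sink} hfroz hkeep hclosed (fun s => rfl)
      ?_ n init hinit
    intro s hsF hsT
    exact hsinkexp (hsT ▸ hsF)
  have hhit : hitProb (fun s t => P' s (σ.1 s) t) {bad} init ≤
      hitProb (fun s t => P s (σ.1 s) t) {bad} init := by
    refine iSup_mono fun n => ?_
    refine hitVal_mono_aux _ _ S' F {bad} hfroz hkeep hclosed ?_ n init hinit
    intro s hsF hsT
    exact hbadexp (hsT ▸ hsF)
  exact ENNReal.div_le_div her (tsub_le_tsub_left hhit 1)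
end

section
/- If a partial sub-chain M' of M violates an upper-bound conditional expected reward property E≤κ(◇T | ¬◇U) (i.e., the conditional expected reward in M' strictly exceeds κ), then M also violates it. -/
open scoped ENNReal Classical

/-- Expected reward accumulated within `n` steps before hitting `T`, while avoiding `U`
(paths that visit `U` contribute no further reward). -/
noncomputable def cerVal {S : Type*} (P : S → S → ℝ≥0∞) (rew : S → ℝ≥0∞) (T U : Set S) :
    ℕ → S → ℝ≥0∞
  | 0, _ => 0
  | n + 1, s =>
    if s ∈ U then 0 else if s ∈ T then 0 else rew s + ∑' t, P s t * cerVal P rew T U n t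

/-- Expected reward accumulated until hitting `T` while avoiding `U`
(`ExpRew(◇T ∧ ¬◇U)`), starting from `s`. -/
noncomputable def cerProb {S : Type*} (P : S → S → ℝ≥0∞) (rew : S → ℝ≥0∞) (T U : Set S)
    (s : S) : ℝ≥0∞ :=
  ⨆ n, cerVal P rew T U n s

lemma tsum_ind_mul {S : Type*} (s : S) (f : S → ℝ≥0∞) :
    ∑' t, (if t = s then (1:ℝ≥0∞) else 0) * f t = f s := by
  rw [tsum_eq_single s]
  · simp
  · intro t ht; simp [ht]

lemma hitVal_loop_zero {S : Type*} (P' : S → S → ℝ≥0∞) (U : Set S) (s : S)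
    (hloop : ∀ t, P' s t = if t = s then 1 else 0) (hsU : s ∉ U) :
    ∀ n, hitVal P' U n s = 0 := by
  intro n
  induction n with
  | zero => simp [hitVal, hsU]
  | succ n ih =>
    simp only [hitVal, if_neg hsU, hloop]
    rw [tsum_ind_mul, ih]

lemma cerVal_loop_zero {S : Type*} (P' : S → S → ℝ≥0∞) (rew' : S → ℝ≥0∞) (T U : Set S)
    (s : S) (hloop : ∀ t, P' s t = if t = s then 1 else 0) (hrew : rew' s = 0)
    (hsU : s ∉ U) (hsT : s ∉ T) :
    ∀ n, cerVal P' rew' T U n s = 0 := by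
  intro n
  induction n with
  | zero => simp [cerVal]
  | succ n ih =>
    simp only [cerVal, if_neg hsU, if_neg hsT, hrew, hloop]
    rw [tsum_ind_mul, ih, zero_add]

lemma hitVal_le {S : Type*} (P P' : S → S → ℝ≥0∞) (S' : Set S)
    (hpart : IsPartialOf P' P S') (U : Set S)
    (hUexp : ∀ s ∈ U, ¬ Expandable P S' s) :
    ∀ n, ∀ s ∈ S', hitVal P' U n s ≤ hitVal P U n s := by
  intro n
  induction n with
  | zero => intro s _; simp [hitVal]
  | succ n ih =>
    intro s hs
    by_cases hexp : Expandable P S' s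
    · have hsU : s ∉ U := fun h => hUexp s h hexp
      rw [hitVal_loop_zero P' U s (hpart.1 s hexp) hsU]
      exact zero_le
    · simp only [hitVal]
      split
      · exact le_rfl
      · refine ENNReal.tsum_le_tsum fun t => ?_
        rw [hpart.2 s hs hexp t]
        by_cases htS : t ∈ S'
        · exact mul_le_mul_right (ih t htS) _
        · have h0 : P s t = 0 := by
            by_contra h; exact hexp ⟨hs, t, htS, h⟩
          simp [h0]

lemma cerVal_le {S : Type*} (P P' : S → S → ℝ≥0∞) (S' : Set S)
    (hpart : IsPartialOf P' P S') (rew : S → ℝ≥0∞) (T U : Set S)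
    (hTexp : ∀ s ∈ T, ¬ Expandable P S' s) (hUexp : ∀ s ∈ U, ¬ Expandable P S' s) :
    ∀ n, ∀ s ∈ S',
      cerVal P' (fun s => if Expandable P S' s then 0 else rew s) T U n s ≤
        cerVal P rew T U n s := by
  intro n
  induction n with
  | zero => intro s _; simp [cerVal]
  | succ n ih =>
    intro s hs
    by_cases hexp : Expandable P S' s
    · have hsU : s ∉ U := fun h => hUexp s h hexp
      have hsT : s ∉ T := fun h => hTexp s h hexp
      rw [cerVal_loop_zero P' _ T U s (hpart.1 s hexp) (by simp [hexp]) hsU hsT]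
      exact zero_le
    · by_cases hsU : s ∈ U
      · simp [cerVal, hsU]
      by_cases hsT : s ∈ T
      · simp [cerVal, hsU, hsT]
      simp only [cerVal, if_neg hsU, if_neg hsT, if_neg hexp]
      refine add_le_add_right (ENNReal.tsum_le_tsum fun t => ?_) _
      rw [hpart.2 s hs hexp t]
      by_cases htS : t ∈ S'
      · exact mul_le_mul_right (ih t htS) _
      · have h0 : P s t = 0 := by
          by_contra h; exact hexp ⟨hs, t, htS, h⟩
        simp [h0]

/-- Implication (1) of the paper: if a partial sub-chain `M'` of `M` (expandable states
made absorbing with reward 0; `T`, `U` contain no expandable states) violates the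
upper-bound conditional expected reward property `E≤κ(◇T | ¬◇U)`, i.e. the conditional
expected reward `ExpRew(◇T ∧ ¬◇U) / (1 - Pr(◇U))` of `M'` strictly exceeds `κ`,
then `M` violates it as well. -/
theorem stmt_12 {S : Type*} [Countable S] (P P' : S → S → ℝ≥0∞)
    (hP : ∀ s, ∑' t, P s t = 1) (hP' : ∀ s, ∑' t, P' s t = 1)
    (rew : S → ℝ≥0∞)
    (S' : Set S) (init : S) (hinit : init ∈ S')
    (hpart : IsPartialOf P' P S')
    (T U : Set S) (hTU : Disjoint T U) (hT : T ⊆ S') (hU : U ⊆ S')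
    (hTexp : ∀ s ∈ T, ¬ Expandable P S' s) (hUexp : ∀ s ∈ U, ¬ Expandable P S' s)
    (kappa : ℝ≥0∞)
    (hviol : kappa <
      cerProb P' (fun s => if Expandable P S' s then 0 else rew s) T U init /
        (1 - hitProb P' U init)) :
    kappa < cerProb P rew T U init / (1 - hitProb P U init) := by
  have h1 : cerProb P' (fun s => if Expandable P S' s then 0 else rew s) T U init ≤
      cerProb P rew T U init :=
    iSup_le fun n =>
      le_trans (cerVal_le P P' S' hpart rew T U hTexp hUexp n init hinit)
        (le_iSup (fun n => cerVal P rew T U n init) n)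
  have h2 : hitProb P' U init ≤ hitProb P U init :=
    iSup_le fun n => le_trans (hitVal_le P P' S' hpart U hUexp n init hinit)
      (le_iSup (fun n => hitVal P U n init) n)
  exact lt_of_lt_of_le hviol (ENNReal.div_le_div h1 (tsub_le_tsub_left h2 1))
end
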